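/- Let P be a 2^n × 2^n rank-2^{n-1} orthogonal projection with P X P = 0 where X = I_{2^{n-1}} ⊕ (-I_{2^{n-1}}). Then there exist unitaries U, V of size 2^{n-1} such that P = (1/2)[[I, UV^†],[VU^†, I]] conjugated appropriately, i.e., P_{11} = P_{22} = (1/2)I_{2^{n-1}} and P_{12} = (1/2) U V^† for some unitaries U, V. -/

import Mathlib

open Matrix

-- trace of a Hermitian idempotent equals its rank
lemma trace_eq_rank_of_proj {m : Type*} [Fintype m] [DecidableEq m]
    {P : Matrix m m ℂ} (hP : P.IsHermitian) (hP2 : P * P = P) :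
    P.trace = (P.rank : ℂ) := by
  have heig : ∀ i, hP.eigenvalues i = 0 ∨ hP.eigenvalues i = 1 := by
    intro i
    have hv := hP.mulVec_eigenvectorBasis i
    have hvne : ⇑(hP.eigenvectorBasis i) ≠ 0 := by
      intro hc
      have : hP.eigenvectorBasis i ≠ 0 := hP.eigenvectorBasis.toBasis.ne_zero i
      apply this
      ext j
      exact congrFun hc j
    have h2 : (P * P) *ᵥ ⇑(hP.eigenvectorBasis i)
        = (hP.eigenvalues i * hP.eigenvalues i) • ⇑(hP.eigenvectorBasis i) := by
      rw [← mulVec_mulVec, hv, mulVec_smul, hv, smul_smul]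
    rw [hP2, hv] at h2
    obtain ⟨j, hj⟩ := Function.ne_iff.mp hvne
    have := congrFun h2 j
    simp only [Pi.smul_apply] at this
    have h3 : (hP.eigenvalues i - hP.eigenvalues i * hP.eigenvalues i) •
        ((WithLp.equiv 2 (m → ℂ)) (hP.eigenvectorBasis i) j) = 0 := by
      rw [sub_smul]; exact sub_eq_zero.mpr this
    rcases smul_eq_zero.mp h3 with h | h
    · have h4 : hP.eigenvalues i * (1 - hP.eigenvalues i) = 0 := by ring_nf; linarith [h]
      rcases mul_eq_zero.mp h4 with h | h
      · exact Or.inl h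
      · right; linarith
    · exact absurd h hj
  have htr : P.trace = ∑ i, (hP.eigenvalues i : ℂ) := by
    conv_lhs => rw [hP.spectral_theorem]
    rw [Unitary.conjStarAlgAut_apply, Matrix.trace_mul_cycle]
    rw [show (star (hP.eigenvectorUnitary : Matrix m m ℂ)) * (hP.eigenvectorUnitary : Matrix m m ℂ) = 1 from Unitary.coe_star_mul_self _, one_mul, trace_diagonal]
    rfl
  rw [htr, hP.rank_eq_card_non_zero_eigs]
  rw [Fintype.card_subtype]
  rw [← Finset.sum_filter_add_sum_filter_not Finset.univ (fun i => hP.eigenvalues i ≠ 0)]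
  have h1 : ∑ i ∈ Finset.univ.filter (fun i => hP.eigenvalues i ≠ 0), (hP.eigenvalues i : ℂ)
      = (Finset.univ.filter (fun i => hP.eigenvalues i ≠ 0)).card := by
    rw [Finset.card_eq_sum_ones]
    push_cast
    apply Finset.sum_congr rfl
    intro i hi
    simp only [Finset.mem_filter] at hi
    rcases heig i with h | h
    · exact absurd h hi.2
    · rw [h]; norm_num
  have h2 : ∑ i ∈ Finset.univ.filter (fun i => ¬ hP.eigenvalues i ≠ 0), (hP.eigenvalues i : ℂ) = 0 := by
    apply Finset.sum_eq_zero
    intro i hi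
    simp only [Finset.mem_filter, not_not] at hi
    rw [hi.2]; norm_num
  rw [h1, h2, add_zero]

-- a Hermitian idempotent with zero trace is zero
lemma proj_trace_zero_eq_zero {m : Type*} [Fintype m]
    {M : Matrix m m ℂ} (hM : M.IsHermitian) (h2 : M * M = M) (ht : M.trace = 0) :
    M = 0 := by
  have hdiag : ∀ i, M i i = ((∑ j, ‖M i j‖ ^ 2 : ℝ) : ℂ) := by
    intro i
    conv_lhs => rw [← h2]
    rw [Matrix.mul_apply]
    push_cast
    apply Finset.sum_congr rfl
    intro j _
    have hji : M j i = starRingEnd ℂ (M i j) := by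
      conv_lhs => rw [← hM]
      rfl
    rw [hji, Complex.mul_conj']
  have hsum : (∑ i, ∑ j, ‖M i j‖ ^ 2 : ℝ) = 0 := by
    have : M.trace = ((∑ i, ∑ j, ‖M i j‖ ^ 2 : ℝ) : ℂ) := by
      rw [Matrix.trace]
      push_cast
      apply Finset.sum_congr rfl
      intro i _
      rw [Matrix.diag_apply, hdiag i]
      push_cast
      rfl
    rw [ht] at this
    exact_mod_cast this.symm
  ext i j
  have h1 : ∀ i ∈ Finset.univ, (0:ℝ) ≤ ∑ j, ‖M i j‖ ^ 2 :=
    fun i _ => Finset.sum_nonneg (fun j _ => sq_nonneg _)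
  have h2' := (Finset.sum_eq_zero_iff_of_nonneg h1).mp hsum i (Finset.mem_univ i)
  have h3 : ∀ j ∈ Finset.univ, (0:ℝ) ≤ ‖M i j‖ ^ 2 := fun j _ => sq_nonneg _
  have := (Finset.sum_eq_zero_iff_of_nonneg h3).mp h2' j (Finset.mem_univ j)
  simpa using pow_eq_zero_iff (n := 2) (by norm_num) |>.mp this |> norm_eq_zero.mp

theorem projection_block_structure (n : ℕ) (hn : 1 ≤ n)
    (P : Matrix (Fin (2 ^ (n - 1)) ⊕ Fin (2 ^ (n - 1)))
                (Fin (2 ^ (n - 1)) ⊕ Fin (2 ^ (n - 1))) ℂ)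
    (hP : P.IsHermitian) (hP2 : P * P = P) (hrank : P.rank = 2 ^ (n - 1))
    (hPXP : P * Matrix.fromBlocks (1 : Matrix (Fin (2 ^ (n - 1))) (Fin (2 ^ (n - 1))) ℂ)
        0 0 (-1) * P = 0) :
    ∃ U V : Matrix (Fin (2 ^ (n - 1))) (Fin (2 ^ (n - 1))) ℂ,
      U * Uᴴ = 1 ∧ Uᴴ * U = 1 ∧ V * Vᴴ = 1 ∧ Vᴴ * V = 1 ∧
      P = Matrix.fromBlocks ((1 / 2 : ℂ) • 1) ((1 / 2 : ℂ) • (U * Vᴴ))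
            ((1 / 2 : ℂ) • (V * Uᴴ)) ((1 / 2 : ℂ) • 1) := by
  set X : Matrix (Fin (2 ^ (n - 1)) ⊕ Fin (2 ^ (n - 1))) (Fin (2 ^ (n - 1)) ⊕ Fin (2 ^ (n - 1))) ℂ :=
    Matrix.fromBlocks 1 0 0 (-1) with hX
  have hXX : X * X = 1 := by
    rw [hX]
    rw [Matrix.fromBlocks_multiply]
    simp [Matrix.fromBlocks_one]
  have hXH : Xᴴ = X := by
    rw [hX, Matrix.fromBlocks_conjTranspose]
    simp
  -- Q = P + X P X is a Hermitian idempotent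
  set Q : Matrix (Fin (2 ^ (n - 1)) ⊕ Fin (2 ^ (n - 1))) (Fin (2 ^ (n - 1)) ⊕ Fin (2 ^ (n - 1))) ℂ := P + X * P * X with hQ
  have e1 : P * (X * P * X) = 0 := by
    have : P * (X * P * X) = (P * X * P) * X := by simp only [mul_assoc]
    rw [this, hPXP, zero_mul]
  have e2 : (X * P * X) * P = 0 := by
    have : (X * P * X) * P = X * (P * X * P) := by simp only [mul_assoc]
    rw [this, hPXP, mul_zero]
  have e3 : (X * P * X) * (X * P * X) = X * P * X := by
    have h : (X * P * X) * (X * P * X) = X * (P * ((X * X) * (P * X))) := by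
      simp only [mul_assoc]
    rw [h, hXX, one_mul, ← mul_assoc P P X, hP2, ← mul_assoc]
  have hQ2 : Q * Q = Q := by
    rw [hQ, add_mul, mul_add, mul_add, hP2, e1, e2, e3, add_zero, zero_add]
  have hQH : Q.IsHermitian := by
    rw [Matrix.IsHermitian, hQ, conjTranspose_add, hP, conjTranspose_mul,
      conjTranspose_mul, hXH, hP, mul_assoc]
  -- trace of Q is the full dimension
  have htrP : P.trace = ((2 ^ (n - 1) : ℕ) : ℂ) := by
    rw [trace_eq_rank_of_proj hP hP2, hrank]
  have htrQ : Q.trace = ((2 ^ (n - 1) : ℕ) : ℂ) + ((2 ^ (n - 1) : ℕ) : ℂ) := by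
    rw [hQ, trace_add, Matrix.trace_mul_cycle, hXX, one_mul, htrP]
  -- hence Q = 1
  have hQ1 : Q = 1 := by
    have hM : (1 - Q) * (1 - Q) = 1 - Q := by
      rw [sub_mul, mul_sub, mul_sub, hQ2, one_mul, mul_one]
      simp only [one_mul, ← hQ]
      abel
    have hMH : (1 - Q).IsHermitian := by
      rw [Matrix.IsHermitian, conjTranspose_sub, hQH, conjTranspose_one]
    have hMt : (1 - Q).trace = 0 := by
      rw [trace_sub, htrQ, trace_one]
      simp [Fintype.card_sum]
    have h1 := proj_trace_zero_eq_zero hMH hM hMt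
    linear_combination (norm := abel) -h1
  -- block decomposition
  set A := P.toBlocks₁₁ with hA
  set B := P.toBlocks₁₂ with hB
  set C := P.toBlocks₂₁ with hC
  set D := P.toBlocks₂₂ with hD
  have hPb : P = Matrix.fromBlocks A B C D := (Matrix.fromBlocks_toBlocks P).symm
  have hCB : C = Bᴴ := by
    have h := hP
    rw [Matrix.IsHermitian, hPb, Matrix.fromBlocks_conjTranspose] at h
    have h2 := congrArg Matrix.toBlocks₂₁ h
    simp only [Matrix.toBlocks_fromBlocks₂₁] at h2
    exact h2.symm
  have hXPX : X * P * X = Matrix.fromBlocks A (-B) (-C) D := by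
    rw [hX, hPb, Matrix.fromBlocks_multiply, Matrix.fromBlocks_multiply]
    congr 1 <;> simp
  have hsum : Matrix.fromBlocks (A + A) 0 0 (D + D)
      = Matrix.fromBlocks (1 : Matrix (Fin (2 ^ (n - 1))) (Fin (2 ^ (n - 1))) ℂ) 0 0 1 := by
    rw [Matrix.fromBlocks_one, ← hQ1, hQ, hXPX]
    conv_rhs => rw [hPb]
    rw [Matrix.fromBlocks_add]
    congr 1 <;> abel
  have hA1 : A + A = 1 := by
    have h := congrArg Matrix.toBlocks₁₁ hsum
    simp only [Matrix.toBlocks_fromBlocks₁₁] at h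
    exact h
  have hD1 : D + D = 1 := by
    have h := congrArg Matrix.toBlocks₂₂ hsum
    simp only [Matrix.toBlocks_fromBlocks₂₂] at h
    exact h
  have hAval : A = (1/2 : ℂ) • 1 := by
    have h2 : (2 : ℂ) • A = 1 := by rw [two_smul]; exact hA1
    calc A = (1/2 : ℂ) • ((2 : ℂ) • A) := by rw [smul_smul]; norm_num
    _ = (1/2 : ℂ) • 1 := by rw [h2]
  have hDval : D = (1/2 : ℂ) • 1 := by
    have h2 : (2 : ℂ) • D = 1 := by rw [two_smul]; exact hD1
    calc D = (1/2 : ℂ) • ((2 : ℂ) • D) := by rw [smul_smul]; norm_num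
    _ = (1/2 : ℂ) • 1 := by rw [h2]
  -- idempotency blockwise
  have hPP : Matrix.fromBlocks (A * A + B * C) (A * B + B * D) (C * A + D * C)
      (C * B + D * D) = Matrix.fromBlocks A B C D := by
    rw [← Matrix.fromBlocks_multiply, ← hPb, hP2, hPb]
  have hBC : B * C = (1/4 : ℂ) • 1 := by
    have h11 : A * A + B * C = A := by
      have h := congrArg Matrix.toBlocks₁₁ hPP
      simp only [Matrix.toBlocks_fromBlocks₁₁] at h
      exact h
    have hbc := eq_sub_of_add_eq' h11
    rw [hbc, hAval, smul_mul_smul_comm, one_mul, ← sub_smul]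
    norm_num
  have hCB2 : C * B = (1/4 : ℂ) • 1 := by
    have h22 : C * B + D * D = D := by
      have h := congrArg Matrix.toBlocks₂₂ hPP
      simp only [Matrix.toBlocks_fromBlocks₂₂] at h
      exact h
    have hcb := eq_sub_of_add_eq h22
    rw [hcb, hDval, smul_mul_smul_comm, one_mul, ← sub_smul]
    norm_num
  -- construct U, V
  have hstar2 : star (2 : ℂ) = 2 := by simp
  refine ⟨(2 : ℂ) • B, 1, ?_, ?_, ?_, ?_, ?_⟩
  · rw [conjTranspose_smul, smul_mul_smul_comm, ← hCB, hBC, smul_smul, hstar2]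
    norm_num
  · rw [conjTranspose_smul, smul_mul_smul_comm, ← hCB, hCB2, smul_smul, hstar2]
    norm_num
  · simp
  · simp
  · have hUB : (1/2 : ℂ) • (((2:ℂ) • B) * (1 : Matrix (Fin (2 ^ (n - 1))) (Fin (2 ^ (n - 1))) ℂ)ᴴ) = B := by
      rw [conjTranspose_one, mul_one, smul_smul]
      norm_num
    have hVB : (1/2 : ℂ) • ((1 : Matrix (Fin (2 ^ (n - 1))) (Fin (2 ^ (n - 1))) ℂ) * ((2:ℂ) • B)ᴴ) = C := by
      rw [one_mul, conjTranspose_smul, hstar2, smul_smul, hCB]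
      norm_num
    rw [hPb, hUB, hVB, hAval, hDval]
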